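/- arXiv:1804.08189 — 4 statements merged into one kernel-verified Lean document; each statement's English description precedes it below -/
import Mathlib

section
/- Let V_m be the span of {q_{a,b} : a+b = m, 0 ≤ a ≤ b} inside C[α_a : a ≥ 0] where q_{a,b} = α_a α_b, and let ∂ be the derivation with ∂α_a = α_{a+1}. Then ∂(V_m) ⊆ V_{m+1}, dim(V_{2m}/∂(V_{2m-1})) = 1, and dim(V_{2m+1}/∂(V_{2m})) = 0 for all m ≥ 1. -/
set_option synthInstance.maxHeartbeats 1000000
set_option maxHeartbeats 1000000


open MvPolynomial

/-- V_m ⊆ ℂ[α_a : a ≥ 0] is the span of q_{a,b} = α_a α_b with a ≤ b, a + b = m. -/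
noncomputable def Vspan (m : ℕ) : Submodule ℂ (MvPolynomial ℕ ℂ) :=
  Submodule.span ℂ {x | ∃ a b : ℕ, a ≤ b ∧ a + b = m ∧ x = X a * X b}

lemma memV {a b n : ℕ} (h : a + b = n) : (X a * X b : MvPolynomial ℕ ℂ) ∈ Vspan n := by
  rcases le_total a b with hab | hab
  · exact Submodule.subset_span ⟨a, b, hab, h, rfl⟩
  · exact Submodule.subset_span ⟨b, a, hab, by omega, mul_comm (X a) (X b)⟩

lemma Dq (D : Derivation ℂ (MvPolynomial ℕ ℂ) (MvPolynomial ℕ ℂ))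
    (hD : ∀ a : ℕ, D (X a) = X (a + 1)) (a b : ℕ) :
    D (X a * X b) = X (a+1) * X b + X a * X (b+1) := by
  rw [Derivation.leibniz, hD, hD, smul_eq_mul, smul_eq_mul]; ring

lemma part1 (D : Derivation ℂ (MvPolynomial ℕ ℂ) (MvPolynomial ℕ ℂ))
    (hD : ∀ a : ℕ, D (X a) = X (a + 1)) :
    ∀ m : ℕ, ∀ x ∈ Vspan m, D x ∈ Vspan (m + 1) := by
  intro m x hx
  induction hx using Submodule.span_induction with
  | mem x h =>
    obtain ⟨a, b, hab, hsum, rfl⟩ := h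
    rw [Dq D hD]
    exact add_mem (memV (by omega)) (memV (by omega))
  | zero => rw [map_zero]; exact zero_mem _
  | add x y hx hy ihx ihy => rw [map_add]; exact add_mem ihx ihy
  | smul c x hx ihx => rw [Derivation.map_smul]; exact Submodule.smul_mem _ _ ihx

lemma phi_val (k a b : ℕ) (h : a + b = 2 * k) :
    aeval (fun n : ℕ => Complex.I ^ (n^2)) (X a * X b : MvPolynomial ℕ ℂ) = (-1 : ℂ)^a := by
  rw [map_mul, aeval_X, aeval_X, ← pow_add]
  have h1 : Complex.I ^ (a^2 + b^2) * Complex.I ^ (2*(a*b)) = 1 := by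
    rw [← pow_add]
    have he : a^2 + b^2 + 2*(a*b) = 4 * k^2 := by nlinarith [h]
    rw [he, pow_mul, Complex.I_pow_four, one_pow]
  have h2 : (Complex.I) ^ (2*(a*b)) = (-1 : ℂ)^(a*b) := by
    rw [pow_mul, Complex.I_sq]
  rw [h2] at h1
  rcases Nat.even_or_odd a with he | ho
  · have hb : Even b := by
      rcases he with ⟨c, hc⟩; exact ⟨k - c, by omega⟩
    rw [(he.mul_right b).neg_one_pow, mul_one] at h1
    rw [h1, he.neg_one_pow]
  · have hb : Odd b := by
      rcases ho with ⟨c, hc⟩; exact ⟨k - c - 1, by omega⟩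
    rw [(ho.mul hb).neg_one_pow] at h1
    rw [ho.neg_one_pow]
    linear_combination -h1

lemma odd_key (D : Derivation ℂ (MvPolynomial ℕ ℂ) (MvPolynomial ℕ ℂ))
    (hD : ∀ a : ℕ, D (X a) = X (a + 1)) (m : ℕ) :
    Vspan (2*m+1) ≤ Submodule.map D.toLinearMap (Vspan (2*m)) := by
  have key : ∀ k a b : ℕ, m - a = k → a ≤ m → a + b = 2*m+1 →
      (X a * X b : MvPolynomial ℕ ℂ) ∈ Submodule.map D.toLinearMap (Vspan (2*m)) := by
    intro k
    induction k with
    | zero =>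
      intro a b h1 h2 h3
      obtain rfl : a = m := by omega
      obtain rfl : b = a + 1 := by omega
      have hmem : D (X a * X a) ∈ Submodule.map D.toLinearMap (Vspan (2*a)) :=
        Submodule.mem_map_of_mem (memV (by omega))
      have hd : D (X a * X a) = (2:ℂ) • (X a * X (a+1)) := by
        rw [Dq D hD, two_smul, mul_comm (X (a+1)) (X a)]
      rw [hd] at hmem
      have h4 := Submodule.smul_mem _ ((2:ℂ)⁻¹) hmem
      rwa [smul_smul, inv_mul_cancel₀ (by norm_num), one_smul] at h4
    | succ k ih =>
      intro a b h1 h2 h3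
      have h4 := ih (a+1) (b-1) (by omega) (by omega) (by omega)
      have hmem : D (X a * X (b-1)) ∈ Submodule.map D.toLinearMap (Vspan (2*m)) :=
        Submodule.mem_map_of_mem (memV (by omega))
      rw [Dq D hD] at hmem
      have hb1 : b - 1 + 1 = b := by omega
      rw [hb1] at hmem
      have h5 := sub_mem hmem h4
      rwa [add_sub_cancel_left] at h5
  rw [Vspan, Submodule.span_le]
  rintro x ⟨a, b, hab, hsum, rfl⟩
  exact key (m - a) a b rfl (by omega) hsum

/-- ∂(V_m) ⊆ V_{m+1}; dim(V_{2m}/∂(V_{2m-1})) = 1 and dim(V_{2m+1}/∂(V_{2m})) = 0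
for all m ≥ 1. -/
theorem stmt_4 (D : Derivation ℂ (MvPolynomial ℕ ℂ) (MvPolynomial ℕ ℂ))
    (hD : ∀ a : ℕ, D (X a) = X (a + 1)) :
    (∀ m : ℕ, ∀ x ∈ Vspan m, D x ∈ Vspan (m + 1)) ∧
    (∀ m : ℕ, 1 ≤ m →
      Module.finrank ℂ
        (↥(Vspan (2 * m)) ⧸
          Submodule.comap (Vspan (2 * m)).subtype
            (Submodule.map D.toLinearMap (Vspan (2 * m - 1)))) = 1 ∧
      Module.finrank ℂ
        (↥(Vspan (2 * m + 1)) ⧸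
          Submodule.comap (Vspan (2 * m + 1)).subtype
            (Submodule.map D.toLinearMap (Vspan (2 * m)))) = 0) := by
  refine ⟨part1 D hD, ?_⟩
  intro m hm
  constructor
  · -- even case: finrank = 1
    set φ := (aeval (fun n : ℕ => Complex.I ^ (n^2)) : MvPolynomial ℕ ℂ →ₐ[ℂ] ℂ) with hφ
    set Img := Submodule.map D.toLinearMap (Vspan (2 * m - 1)) with hImg
    have hker : ∀ y ∈ Img, φ y = 0 := by
      have hker0 : Vspan (2*m-1) ≤ LinearMap.ker (φ.toLinearMap ∘ₗ D.toLinearMap) := by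
        rw [Vspan, Submodule.span_le]
        rintro x ⟨a, b, hab, hsum, rfl⟩
        simp only [SetLike.mem_coe, LinearMap.mem_ker, LinearMap.comp_apply,
          AlgHom.toLinearMap_apply, Derivation.coeFn_coe]
        show φ (D (X a * X b)) = 0
        rw [Dq D hD, map_add, hφ, phi_val m (a+1) b (by omega), phi_val m a (b+1) (by omega),
          pow_succ]
        ring
      rintro y ⟨z, hz, rfl⟩
      exact hker0 hz
    have he0 : φ (X 0 * X (2*m)) = 1 := by
      rw [hφ, phi_val m 0 (2*m) (by omega)]; norm_num
    have hne : (X 0 * X (2*m) : MvPolynomial ℕ ℂ) ∉ Img := by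
      intro h
      have := hker _ h
      rw [he0] at this
      exact one_ne_zero this
    have step : ∀ a b : ℕ, a + b = 2*m →
        (X a * X b : MvPolynomial ℕ ℂ) - ((-1:ℂ)^a) • (X 0 * X (2*m)) ∈ Img := by
      intro a
      induction a with
      | zero =>
        intro b hb
        have hb' : b = 2*m := by omega
        subst hb'
        simp
      | succ a ih =>
        intro b hb
        have h1 := ih (b+1) (by omega)
        have hmem : D (X a * X b) ∈ Img := Submodule.mem_map_of_mem (memV (by omega))
        rw [Dq D hD] at hmem
        have h2 := sub_mem hmem h1
        have heq : (X (a+1) * X b : MvPolynomial ℕ ℂ) - ((-1:ℂ)^(a+1)) • (X 0 * X (2*m)) =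
            (X (a+1) * X b + X a * X (b+1)) -
              (X a * X (b+1) - ((-1:ℂ)^a) • (X 0 * X (2*m))) := by
          rw [pow_succ]
          module
        rwa [heq]
    have claim : ∀ x ∈ Vspan (2*m),
        x - φ x • (X 0 * X (2*m) : MvPolynomial ℕ ℂ) ∈ Img := by
      intro x hx
      have hsub : Vspan (2*m) ≤ Submodule.comap
          (LinearMap.id - (LinearMap.toSpanSingleton ℂ (MvPolynomial ℕ ℂ)
            (X 0 * X (2*m))).comp φ.toLinearMap) Img := by
        rw [Vspan, Submodule.span_le]
        rintro y ⟨a, b, hab, hsum, rfl⟩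
        simp only [SetLike.mem_coe, Submodule.mem_comap, LinearMap.sub_apply,
          LinearMap.id_apply, LinearMap.comp_apply, AlgHom.toLinearMap_apply,
          LinearMap.toSpanSingleton_apply]
        rw [hφ, phi_val m a b hsum]
        exact step a b hsum
      have := hsub hx
      simpa using this
    have h2m : (0:ℕ) + 2*m = 2*m := by omega
    refine _root_.finrank_eq_one
      (Submodule.Quotient.mk ⟨X 0 * X (2*m), memV h2m⟩) ?_ ?_
    · intro h0
      rw [Submodule.Quotient.mk_eq_zero] at h0
      exact hne h0
    · intro w
      obtain ⟨⟨x, hx⟩, rfl⟩ := Submodule.Quotient.mk_surjective _ w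
      refine ⟨φ x, ?_⟩
      rw [← Submodule.Quotient.mk_smul, Submodule.Quotient.eq]
      have h3 := neg_mem (claim x hx)
      rw [neg_sub] at h3
      exact h3
  · -- odd case: finrank = 0
    have htop : Submodule.comap (Vspan (2*m+1)).subtype
        (Submodule.map D.toLinearMap (Vspan (2*m))) = ⊤ := by
      rw [eq_top_iff]
      rintro ⟨x, hx⟩ -
      exact odd_key D hD m hx
    rw [htop]
    have : Subsingleton (↥(Vspan (2*m+1)) ⧸ (⊤ : Submodule ℂ ↥(Vspan (2*m+1)))) :=
      Submodule.Quotient.subsingleton_iff.mpr rfl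
    exact Module.finrank_zero_of_subsingleton
end

section
/- With V_m as above (span of q_{a,b} = α_a α_b with a+b = m) and derivation ∂(α_a) = α_{a+1}, the set {∂^{2k} q_{0,2m-2k} : 0 ≤ k ≤ m} is a basis of V_{2m}, and {∂^{2k+1} q_{0,2m-2k} : 0 ≤ k ≤ m} is a basis of V_{2m+1}. -/
open MvPolynomial

/-- Iterated Leibniz rule for `D` on a product of two variables. -/
lemma iterLeibniz (D : Derivation ℂ (MvPolynomial ℕ ℂ) (MvPolynomial ℕ ℂ))
    (hD : ∀ a : ℕ, D (X a) = X (a + 1)) :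
    ∀ n a b : ℕ, (D.toLinearMap ^ n) (X a * X b)
      = ∑ i ∈ Finset.range (n+1), (n.choose i) • (X (a+i) * X (b+(n-i)) : MvPolynomial ℕ ℂ) := by
  intro n
  induction n with
  | zero => intro a b; simp
  | succ n IH =>
    intro a b
    have hpow : (D.toLinearMap ^ (n+1)) (X a * X b : MvPolynomial ℕ ℂ)
        = (D.toLinearMap ^ n) (D.toLinearMap (X a * X b)) := by
      rw [pow_succ]; rfl
    have hDstep : D.toLinearMap (X a * X b : MvPolynomial ℕ ℂ)
        = X (a+1) * X b + X a * X (b+1) := by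
      show D (X a * X b) = _
      rw [D.leibniz, hD, hD, smul_eq_mul, smul_eq_mul]
      ring
    rw [hpow, hDstep, map_add, IH, IH]
    set T : ℕ → MvPolynomial ℕ ℂ := fun j => X (a+j) * X (b+(n+1-j)) with hT
    have h1 : ∑ i ∈ Finset.range (n+1), (n.choose i) • (X (a+1+i) * X (b+(n-i)) : MvPolynomial ℕ ℂ)
        = ∑ i ∈ Finset.range (n+1), (n.choose i) • T (i+1) := by
      refine Finset.sum_congr rfl fun i hi => ?_
      have e1 : a+1+i = a+(i+1) := by omega
      have e2 : b+(n-i) = b+(n+1-(i+1)) := by omega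
      rw [hT]; rw [e1, e2]
    have h2 : ∑ i ∈ Finset.range (n+1), (n.choose i) • (X (a+i) * X (b+1+(n-i)) : MvPolynomial ℕ ℂ)
        = ∑ i ∈ Finset.range (n+1), (n.choose i) • T i := by
      refine Finset.sum_congr rfl fun i hi => ?_
      simp only [Finset.mem_range] at hi
      have e2 : b+1+(n-i) = b+(n+1-i) := by omega
      rw [hT]; rw [e2]
    rw [h1, h2]
    rw [Finset.sum_range_succ' (fun j => ((n+1).choose j) • T j) (n+1)]
    simp only [Nat.choose_succ_succ, add_smul, Finset.sum_add_distrib, Nat.choose_zero_right,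
      one_smul]
    have key : ∑ i ∈ Finset.range (n+1), (n.choose (i+1)) • T (i+1) + T 0
        = ∑ i ∈ Finset.range (n+1), (n.choose i) • T i := by
      have h5 := Finset.sum_range_succ' (fun j => (n.choose j) • T j) (n+1)
      have h6 := Finset.sum_range_succ (fun j => (n.choose j) • T j) (n+1)
      simp only [Nat.choose_zero_right, one_smul, Nat.choose_succ_self, zero_smul, add_zero] at h5 h6
      rw [← h5, h6]
    rw [← key]; abel

/-- Explicit expansion of `D^(2k+c) (q_{0,2m-2k})`. -/
lemma v_formula (D : Derivation ℂ (MvPolynomial ℕ ℂ) (MvPolynomial ℕ ℂ))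
    (hD : ∀ a : ℕ, D (X a) = X (a + 1)) (m k c : ℕ) (hk : k ≤ m) :
    (D.toLinearMap ^ (2*k+c)) (X 0 * X (2*m-2*k))
      = ∑ i ∈ Finset.range (2*k+c+1),
          ((2*k+c).choose i) • (X i * X (2*m+c-i) : MvPolynomial ℕ ℂ) := by
  rw [iterLeibniz D hD]
  refine Finset.sum_congr rfl fun i hi => ?_
  simp only [Finset.mem_range] at hi
  have e1 : 0 + i = i := by omega
  have e2 : 2*m-2*k + (2*k+c-i) = 2*m+c-i := by omega
  rw [e1, e2]

/-- A linear map picking out the "off-diagonal symmetric function" of a quadratic. -/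
noncomputable def Lmap : MvPolynomial ℕ ℂ →ₗ[ℂ] Polynomial ℂ :=
  (aeval fun a : ℕ => 1 + Polynomial.X ^ a).toLinearMap
    - (aeval fun _ : ℕ => (1 : Polynomial ℂ)).toLinearMap
    - (aeval fun a : ℕ => (Polynomial.X : Polynomial ℂ) ^ a).toLinearMap

lemma Lmap_XX (p q : ℕ) :
    Lmap (X p * X q) = Polynomial.X ^ p + Polynomial.X ^ q := by
  simp only [Lmap, LinearMap.sub_apply, AlgHom.toLinearMap_apply, map_mul, aeval_X]
  ring

lemma Lv (D : Derivation ℂ (MvPolynomial ℕ ℂ) (MvPolynomial ℕ ℂ))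
    (hD : ∀ a : ℕ, D (X a) = X (a + 1)) (m k c : ℕ) (hk : k ≤ m) :
    Lmap ((D.toLinearMap ^ (2*k+c)) (X 0 * X (2*m-2*k)))
      = (1 + Polynomial.X)^(2*k+c) * (1 + Polynomial.X^(2*m-2*k)) := by
  rw [v_formula D hD m k c hk, map_sum]
  simp only [map_nsmul, Lmap_XX]
  have hsplit : ∑ i ∈ Finset.range (2*k+c+1),
      ((2*k+c).choose i) • ((Polynomial.X:Polynomial ℂ) ^ i + Polynomial.X ^ (2*m+c-i))
      = (∑ i ∈ Finset.range (2*k+c+1), ((2*k+c).choose i) • (Polynomial.X:Polynomial ℂ) ^ i)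
        + ∑ i ∈ Finset.range (2*k+c+1), ((2*k+c).choose i) • (Polynomial.X:Polynomial ℂ) ^ (2*m+c-i) := by
    rw [← Finset.sum_add_distrib]
    exact Finset.sum_congr rfl fun i _ => smul_add _ _ _
  rw [hsplit]
  have h1 : (∑ i ∈ Finset.range (2*k+c+1), ((2*k+c).choose i) • (Polynomial.X:Polynomial ℂ) ^ i)
      = (1 + Polynomial.X)^(2*k+c) := by
    rw [add_comm (1:Polynomial ℂ), add_pow]
    exact Finset.sum_congr rfl fun i _ => by rw [one_pow, mul_one, nsmul_eq_mul, mul_comm]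
  have h2 : (∑ i ∈ Finset.range (2*k+c+1), ((2*k+c).choose i) • (Polynomial.X:Polynomial ℂ) ^ (2*m+c-i))
      = Polynomial.X^(2*m-2*k) * (1 + Polynomial.X)^(2*k+c) := by
    rw [add_pow, Finset.mul_sum]
    refine Finset.sum_congr rfl fun i hi => ?_
    simp only [Finset.mem_range] at hi
    rw [one_pow, one_mul, nsmul_eq_mul, ← mul_assoc, ← pow_add]
    have e : 2*m-2*k + (2*k+c-i) = 2*m+c-i := by omega
    rw [e, mul_comm]
  rw [h1, h2]
  ring

/-- The polynomials `(1+t)^(2k+c) (1+t^(2m-2k))`, `k = 0, …, m`, are linearly independent. -/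
lemma polys_indep (m c : ℕ) :
    LinearIndependent ℂ (fun k : Fin (m+1) =>
      ((1 + Polynomial.X)^(2*(k:ℕ)+c) * (1 + Polynomial.X^(2*m-2*(k:ℕ))) : Polynomial ℂ)) := by
  rw [Fintype.linearIndependent_iff]
  intro g hg
  have hX1 : (1 + Polynomial.X : Polynomial ℂ) ≠ 0 := by
    intro h
    have := congrArg (Polynomial.eval (0:ℂ)) h
    simp at this
  have key : ∀ N : ℕ, ∀ i : Fin (m+1), (i : ℕ) = N → g i = 0 := by
    intro N
    induction N using Nat.strong_induction_on with
    | _ N IH =>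
      intro i hiN
      have hlow : ∀ j : Fin (m+1), (j:ℕ) < N → g j = 0 := fun j hj => IH _ hj j rfl
      set h : Fin (m+1) → Polynomial ℂ := fun k =>
        g k • ((1 + Polynomial.X)^(2*((k:ℕ)-N)) * (1 + Polynomial.X^(2*m-2*(k:ℕ)))) with hh
      have hterm : ∀ k : Fin (m+1),
          g k • ((1 + Polynomial.X)^(2*(k:ℕ)+c) * (1 + Polynomial.X^(2*m-2*(k:ℕ))))
            = (1 + Polynomial.X)^(2*N+c) * h k := by
        intro k
        by_cases hk : (k:ℕ) < N
        · rw [hh]; simp [hlow k hk]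
        · push_neg at hk
          have e : 2*(k:ℕ)+c = (2*N+c) + 2*((k:ℕ)-N) := by omega
          rw [hh, e, pow_add]
          simp only [smul_eq_mul]
          rw [Algebra.mul_smul_comm]
          ring_nf
      have hsum : (1 + Polynomial.X)^(2*N+c) * ∑ k, h k = 0 := by
        rw [Finset.mul_sum]
        rw [← hg]
        exact Finset.sum_congr rfl fun k _ => (hterm k).symm
      have hzero : ∑ k, h k = 0 := by
        rcases mul_eq_zero.mp hsum with h1 | h2
        · exact absurd h1 (pow_ne_zero _ hX1)
        · exact h2
      have heval := congrArg (Polynomial.eval (-1 : ℂ)) hzero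
      rw [Polynomial.eval_finset_sum] at heval
      simp only [Polynomial.eval_zero] at heval
      have hevalterm : ∀ k : Fin (m+1), Polynomial.eval (-1 : ℂ) (h k)
          = if (k:ℕ) = N then 2 * g k else 0 := by
        intro k
        rw [hh]
        simp only [Polynomial.eval_smul, Polynomial.eval_mul, Polynomial.eval_pow,
          Polynomial.eval_add, Polynomial.eval_one, Polynomial.eval_X, smul_eq_mul]
        have hpar : ((-1 : ℂ))^(2*m-2*(k:ℕ)) = 1 := by
          have : Even (2*m-2*(k:ℕ)) := ⟨m - (k:ℕ), by omega⟩
          exact this.neg_one_pow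
        rw [hpar]
        by_cases hk : (k:ℕ) = N
        · simp [hk]; ring
        · by_cases hk2 : (k:ℕ) < N
          · simp [hlow k hk2, hk]
          · rw [if_neg hk]
            have : ((1:ℂ) + (-1))^(2*((k:ℕ)-N)) = 0 := by
              rw [show (1:ℂ) + (-1) = 0 by ring, zero_pow (by omega)]
            rw [this]; ring
      have hcond : ∀ k : Fin (m+1), ((k:ℕ) = N) = (k = i) := by
        intro k
        simp only [eq_iff_iff]
        constructor
        · intro hk; exact Fin.ext (by omega)
        · intro hk; rw [hk, hiN]
      rw [Finset.sum_congr rfl fun k _ => hevalterm k] at heval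
      simp only [hcond] at heval
      rw [Finset.sum_ite_eq' Finset.univ i (fun k => 2 * g k)] at heval
      simp only [Finset.mem_univ, if_true] at heval
      have h2 : (2:ℂ) ≠ 0 := two_ne_zero
      exact (mul_eq_zero.mp heval).resolve_left h2
  exact fun i => key (i:ℕ) i rfl

lemma vspan_eq (M : ℕ) : Vspan M = Submodule.span ℂ
    (Set.range (fun a : Fin (M/2+1) => (X (a:ℕ) * X (M - (a:ℕ)) : MvPolynomial ℕ ℂ))) := by
  unfold Vspan
  congr 1
  ext x
  constructor
  · rintro ⟨a, b, hab, habM, rfl⟩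
    refine ⟨⟨a, by omega⟩, ?_⟩
    have hb : b = M - a := by omega
    simp only [hb]
  · rintro ⟨a, rfl⟩
    have ha : (a:ℕ) ≤ M/2 := by omega
    exact ⟨(a:ℕ), M - (a:ℕ), by omega, by omega, rfl⟩

lemma XX_mem_vspan (M i : ℕ) (hi : i ≤ M) : (X i * X (M - i) : MvPolynomial ℕ ℂ) ∈ Vspan M := by
  apply Submodule.subset_span
  by_cases h : i ≤ M - i
  · exact ⟨i, M - i, h, by omega, rfl⟩
  · exact ⟨M - i, i, by omega, by omega, mul_comm _ _⟩

lemma finrank_vspan_le (M : ℕ) : Module.finrank ℂ (Vspan M) ≤ M/2 + 1 := by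
  rw [vspan_eq]
  have := finrank_range_le_card (R := ℂ)
    (fun a : Fin (M/2+1) => (X (a:ℕ) * X (M - (a:ℕ)) : MvPolynomial ℕ ℂ))
  simpa [Set.finrank, Fintype.card_fin] using this

instance vspan_fd (M : ℕ) : FiniteDimensional ℂ (Vspan M) := by
  rw [vspan_eq]
  exact FiniteDimensional.span_of_finite ℂ (Set.finite_range _)

/-- Combined statement for exponent shift `c ∈ {0,1}`. -/
lemma main_c (D : Derivation ℂ (MvPolynomial ℕ ℂ) (MvPolynomial ℕ ℂ))
    (hD : ∀ a : ℕ, D (X a) = X (a + 1)) (m c : ℕ) (hc : c ≤ 1) :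
    LinearIndependent ℂ
        (fun k : Fin (m + 1) => (D.toLinearMap ^ (2 * (k:ℕ) + c)) (X 0 * X (2 * m - 2 * (k:ℕ)))) ∧
      Submodule.span ℂ
        (Set.range (fun k : Fin (m + 1) =>
          (D.toLinearMap ^ (2 * (k:ℕ) + c)) (X 0 * X (2 * m - 2 * (k:ℕ))))) = Vspan (2 * m + c) := by
  set f : Fin (m+1) → MvPolynomial ℕ ℂ :=
    fun k => (D.toLinearMap ^ (2 * (k:ℕ) + c)) (X 0 * X (2 * m - 2 * (k:ℕ))) with hf
  have hkm : ∀ k : Fin (m+1), (k:ℕ) ≤ m := fun k => by omega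
  have hindep : LinearIndependent ℂ f := by
    apply LinearIndependent.of_comp Lmap
    have hcomp : (Lmap ∘ f) = fun k : Fin (m+1) =>
        ((1 + Polynomial.X)^(2*(k:ℕ)+c) * (1 + Polynomial.X^(2*m-2*(k:ℕ))) : Polynomial ℂ) := by
      funext k
      exact Lv D hD m (k:ℕ) c (hkm k)
    rw [hcomp]
    exact polys_indep m c
  refine ⟨hindep, ?_⟩
  have hle : Submodule.span ℂ (Set.range f) ≤ Vspan (2 * m + c) := by
    rw [Submodule.span_le]
    rintro _ ⟨k, rfl⟩
    rw [hf]
    simp only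
    rw [v_formula D hD m (k:ℕ) c (hkm k)]
    apply Submodule.sum_mem
    intro i hi
    simp only [Finset.mem_range] at hi
    apply nsmul_mem
    have e : (2*m+c-i : ℕ) = (2*m+c) - i := rfl
    exact XX_mem_vspan (2*m+c) i (by omega)
  have hrank1 : Module.finrank ℂ (Submodule.span ℂ (Set.range f)) = m + 1 := by
    rw [finrank_span_eq_card hindep, Fintype.card_fin]
  have hrank2 : Module.finrank ℂ (Vspan (2*m+c)) ≤ m + 1 := by
    have := finrank_vspan_le (2*m+c)
    have hdiv : (2*m+c)/2 = m := by omega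
    omega
  exact Submodule.eq_of_le_of_finrank_le hle (by omega)

/-- {∂^{2k} q_{0,2m-2k} : 0 ≤ k ≤ m} is a basis of V_{2m}, and
{∂^{2k+1} q_{0,2m-2k} : 0 ≤ k ≤ m} is a basis of V_{2m+1}. -/
theorem stmt_5 (D : Derivation ℂ (MvPolynomial ℕ ℂ) (MvPolynomial ℕ ℂ))
    (hD : ∀ a : ℕ, D (X a) = X (a + 1)) (m : ℕ) :
    (LinearIndependent ℂ
        (fun k : Fin (m + 1) => (D.toLinearMap ^ (2 * (k : ℕ))) (X 0 * X (2 * m - 2 * k))) ∧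
      Submodule.span ℂ
        (Set.range (fun k : Fin (m + 1) =>
          (D.toLinearMap ^ (2 * (k : ℕ))) (X 0 * X (2 * m - 2 * k)))) = Vspan (2 * m)) ∧
    (LinearIndependent ℂ
        (fun k : Fin (m + 1) => (D.toLinearMap ^ (2 * (k : ℕ) + 1)) (X 0 * X (2 * m - 2 * k))) ∧
      Submodule.span ℂ
        (Set.range (fun k : Fin (m + 1) =>
          (D.toLinearMap ^ (2 * (k : ℕ) + 1)) (X 0 * X (2 * m - 2 * k)))) = Vspan (2 * m + 1)) := by
  constructor
  · have h0 := main_c D hD m 0 (by omega)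
    simpa using h0
  · exact main_c D hD m 1 (by omega)
end

section
/- Let R = C[α_a^i : a ≥ 0, 1 ≤ i ≤ n] with derivation ∂(α_a^i) = α_{a+1}^i, and θ the automorphism negating all variables. Then R^θ is generated as a ∂-ring (i.e., as a C-algebra closed under ∂, generated together with all derivatives) by the set {q^{i,i}_{0,2m} : m ≥ 0, 1 ≤ i ≤ n} ∪ {q^{i,j}_{0,m} : m ≥ 0, 1 ≤ i < j ≤ n}, where q^{i,j}_{a,b} = α_a^i α_b^j. -/
open MvPolynomial

section Aux

variable {n : ℕ}

noncomputable abbrev Raux (n : ℕ) := MvPolynomial (ℕ × Fin n) ℂ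

/-- conjugate a derivation by an algebra equivalence -/
noncomputable def conjDer (D : Derivation ℂ (Raux n) (Raux n)) (θ : Raux n ≃ₐ[ℂ] Raux n) :
    Derivation ℂ (Raux n) (Raux n) where
  toLinearMap := θ.symm.toLinearMap ∘ₗ D.toLinearMap ∘ₗ θ.toLinearMap
  map_one_eq_zero' := by simp
  leibniz' a b := by
    simp only [LinearMap.comp_apply, AlgEquiv.toLinearMap_apply, Derivation.coeFn_coe,
      map_mul, Derivation.leibniz, map_add, map_smul]
    simp [smul_eq_mul, map_mul, mul_comm, add_comm]

@[simp] lemma conjDer_apply (D : Derivation ℂ (Raux n) (Raux n)) (θ : Raux n ≃ₐ[ℂ] Raux n)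
    (x : Raux n) : conjDer D θ x = θ.symm (D (θ x)) := rfl

lemma theta_monomial (θ : Raux n ≃ₐ[ℂ] Raux n) (hθ : ∀ v : ℕ × Fin n, θ (X v) = - X v)
    (s : (ℕ × Fin n) →₀ ℕ) (c : ℂ) :
    θ (monomial s c) = ((-1 : ℂ) ^ (s.sum fun _ e => e)) • monomial s c := by
  rw [monomial_eq, map_mul]
  have hC : θ (C c) = C c := by
    simpa using θ.commutes c
  rw [hC]
  rw [Finsupp.prod, map_prod]
  have : ∀ v ∈ s.support, θ (X v ^ s v) = ((-1 : Raux n) ^ s v) * (X v ^ s v) := by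
    intro v _
    rw [map_pow, hθ, neg_pow]
  rw [Finset.prod_congr rfl this, Finset.prod_mul_distrib, Finset.prod_pow_eq_pow_sum]
  have hsign : ((-1 : Raux n) ^ (∑ v ∈ s.support, s v)) = C ((-1:ℂ) ^ (∑ v ∈ s.support, s v)) := by
    rw [map_pow, map_neg, map_one]
  rw [hsign, Finsupp.sum, smul_eq_C_mul]
  ring

lemma prodX_toMultiset (s : (ℕ × Fin n) →₀ ℕ) :
    ((s.toMultiset).map X).prod = (s.prod fun v e => (X v : Raux n) ^ e) := by
  induction s using Finsupp.induction with
  | zero => simp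
  | single_add a b f ha hb ih =>
    rw [Finsupp.toMultiset_add, Multiset.map_add, Multiset.prod_add, ih,
      Finsupp.toMultiset_single, Multiset.map_nsmul, Multiset.map_singleton,
      Multiset.prod_nsmul, Multiset.prod_singleton,
      Finsupp.prod_add_index (fun _ _ => pow_zero _) (fun _ _ _ _ => pow_add _ _ _)]
    simp [Finsupp.prod_single_index]

end Aux

/-- The fixed subalgebra R^θ of R = ℂ[α_a^i] under negation of all variables is
generated as a ∂-ring by {q^{i,i}_{0,2m}} ∪ {q^{i,j}_{0,m} : i < j}: it contains this
set, is closed under ∂, and is contained in every ∂-closed subalgebra containing the set. -/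
theorem stmt_16 (n : ℕ)
    (D : Derivation ℂ (MvPolynomial (ℕ × Fin n) ℂ) (MvPolynomial (ℕ × Fin n) ℂ))
    (hD : ∀ (a : ℕ) (i : Fin n), D (X (a, i)) = X (a + 1, i))
    (θ : MvPolynomial (ℕ × Fin n) ℂ ≃ₐ[ℂ] MvPolynomial (ℕ × Fin n) ℂ)
    (hθ : ∀ v : ℕ × Fin n, θ (X v) = - X v)
    (S : Set (MvPolynomial (ℕ × Fin n) ℂ))
    (hS : S = {x | (∃ (m : ℕ) (i : Fin n), x = X (0, i) * X (2 * m, i)) ∨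
      (∃ (m : ℕ) (i j : Fin n), i < j ∧ x = X (0, i) * X (m, j))}) :
    (∀ x ∈ S, θ x = x) ∧
    (∀ x : MvPolynomial (ℕ × Fin n) ℂ, θ x = x → D x ∈ {y | θ y = y}) ∧
    (∀ A : Subalgebra ℂ (MvPolynomial (ℕ × Fin n) ℂ),
      S ⊆ A → (∀ x ∈ A, D x ∈ A) →
      ∀ x : MvPolynomial (ℕ × Fin n) ℂ, θ x = x → x ∈ A) := by
  subst hS
  have Dmul : ∀ (a b : ℕ) (i j : Fin n),
      D (X (a, i) * X (b, j)) = X (a + 1, i) * X (b, j) + X (a, i) * X (b + 1, j) := by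
    intro a b i j
    rw [Derivation.leibniz, hD, hD, smul_eq_mul, smul_eq_mul]
    ring
  refine ⟨?_, ?_, ?_⟩
  · -- θ fixes S
    rintro x (⟨m, i, rfl⟩ | ⟨m, i, j, hij, rfl⟩) <;>
      rw [map_mul, hθ, hθ, neg_mul_neg]
  · -- fixed points are closed under D
    intro x hx
    have hsymm : ∀ v : ℕ × Fin n, θ.symm (X v) = - X v := by
      intro v
      apply θ.injective
      rw [AlgEquiv.apply_symm_apply, map_neg, hθ, neg_neg]
    have hED : conjDer D θ = D := by
      apply derivation_ext
      intro v
      rw [conjDer_apply, hθ]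
      rw [map_neg]
      obtain ⟨a, i⟩ := v
      rw [hD, map_neg, hsymm, neg_neg]
    have := congrArg (fun E : Derivation ℂ (Raux n) (Raux n) => E x) hED
    simp only [conjDer_apply, hx] at this
    show θ (D x) = D x
    conv_lhs => rw [← this]
    simp
  · -- generation
    intro A hSA hDA x hx
    have hdiag0 : ∀ (m : ℕ) (i : Fin n), (X (0, i) * X (2 * m, i) : Raux n) ∈ A :=
      fun m i => hSA (Or.inl ⟨m, i, rfl⟩)
    have hoff0 : ∀ (m : ℕ) (i j : Fin n), i < j → (X (0, i) * X (m, j) : Raux n) ∈ A :=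
      fun m i j hij => hSA (Or.inr ⟨m, i, j, hij, rfl⟩)
    -- off-diagonal pairs
    have off2 : ∀ (i j : Fin n), i < j → ∀ (a b : ℕ), (X (a, i) * X (b, j) : Raux n) ∈ A := by
      intro i j hij a
      induction a with
      | zero => exact fun b => hoff0 b i j hij
      | succ a ih =>
        intro b
        have h1 := hDA _ (ih b)
        rw [Dmul] at h1
        have h2 := A.sub_mem h1 (ih (b + 1))
        simpa using h2
    -- diagonal pairs
    have diag2 : ∀ (i : Fin n) (a b : ℕ), (X (a, i) * X (b, i) : Raux n) ∈ A := by
      intro i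
      suffices H : ∀ N a b, a + b = N → (X (a, i) * X (b, i) : Raux n) ∈ A from
        fun a b => H (a + b) a b rfl
      intro N
      induction N with
      | zero =>
        intro a b hab
        obtain ⟨rfl, rfl⟩ : a = 0 ∧ b = 0 := by omega
        have h := hdiag0 0 i
        simp only [Nat.mul_zero] at h
        exact h
      | succ N ih =>
        have H' : ∀ a b, a + b = N + 1 → a ≤ b → (X (a, i) * X (b, i) : Raux n) ∈ A := by
          rcases Nat.even_or_odd N with ⟨k, hk⟩ | ⟨k, hk⟩
          · -- N = 2k, level N+1 = 2k+1 odd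
            subst hk
            have inner : ∀ t, t ≤ k → (X (k - t, i) * X (k + 1 + t, i) : Raux n) ∈ A := by
              intro t
              induction t with
              | zero =>
                intro _
                have hk2 : (X (k, i) * X (k, i) : Raux n) ∈ A := ih k k (by omega)
                have h1 := hDA _ hk2
                rw [Dmul] at h1
                have heq : (X (k, i) * X (k + 1, i) : Raux n) =
                    (1/2 : ℂ) • (X (k + 1, i) * X (k, i) + X (k, i) * X (k + 1, i)) := by
                  rw [mul_comm (X (k + 1, i) : Raux n), ← two_smul ℂ, smul_smul]
                  norm_num
                have h2 := A.smul_mem h1 (1/2 : ℂ)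
                rw [← heq] at h2
                exact h2
              | succ t iht =>
                intro ht
                have iht' := iht (by omega)
                have hlev : (X (k - (t + 1), i) * X (k + 1 + t, i) : Raux n) ∈ A :=
                  ih _ _ (by omega)
                have h1 := hDA _ hlev
                rw [Dmul] at h1
                have e1 : k - (t + 1) + 1 = k - t := by omega
                rw [e1] at h1
                have h2 := A.sub_mem h1 iht'
                have e2 : k + 1 + t + 1 = k + 1 + (t + 1) := by omega
                rw [e2] at h2
                simpa using h2
            intro a b hab hle
            have ha : a ≤ k := by omega
            have hb : b = k + 1 + (k - a) := by omega
            have := inner (k - a) (by omega)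
            rw [show k - (k - a) = a by omega] at this
            rw [hb]
            exact this
          · -- N = 2k+1, level N+1 = 2k+2 even
            subst hk
            have inner : ∀ t, t ≤ k + 1 → (X (t, i) * X (2 * k + 2 - t, i) : Raux n) ∈ A := by
              intro t
              induction t with
              | zero =>
                intro _
                have := hdiag0 (k + 1) i
                rw [show 2 * (k + 1) = 2 * k + 2 - 0 by omega] at this
                exact this
              | succ t iht =>
                intro ht
                have iht' := iht (by omega)
                have hlev : (X (t, i) * X (2 * k + 1 - t, i) : Raux n) ∈ A :=
                  ih _ _ (by omega)
                have h1 := hDA _ hlev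
                rw [Dmul] at h1
                rw [show 2 * k + 1 - t + 1 = 2 * k + 2 - t by omega] at h1
                have h2 := A.sub_mem h1 iht'
                rw [show 2 * k + 1 - t = 2 * k + 2 - (t + 1) by omega] at h2
                simpa using h2
            intro a b hab hle
            have := inner a (by omega)
            rw [show 2 * k + 2 - a = b by omega] at this
            exact this
        intro a b hab
        rcases le_total a b with h | h
        · exact H' a b hab h
        · rw [mul_comm]
          exact H' b a (by omega) h
    -- all pairs
    have pairs : ∀ u v : ℕ × Fin n, (X u * X v : Raux n) ∈ A := by
      rintro ⟨a, i⟩ ⟨b, j⟩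
      rcases lt_trichotomy i j with h | h | h
      · exact off2 i j h a b
      · subst h; exact diag2 i a b
      · rw [mul_comm]; exact off2 j i h b a
    -- products over even multisets
    have multis : ∀ s : Multiset (ℕ × Fin n), Even (Multiset.card s) →
        ((s.map X).prod : Raux n) ∈ A := by
      intro s
      induction s using Multiset.strongInductionOn with
      | ih s ihs =>
        intro hev
        rcases Multiset.empty_or_exists_mem s with rfl | ⟨u, hu⟩
        · simpa using A.one_mem
        · obtain ⟨t, rfl⟩ := Multiset.exists_cons_of_mem hu
          have ht0 : t ≠ 0 := by
            rintro rfl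
            simp at hev
          obtain ⟨v, hv⟩ := Multiset.exists_mem_of_ne_zero ht0
          obtain ⟨r, rfl⟩ := Multiset.exists_cons_of_mem hv
          have hr : r < u ::ₘ v ::ₘ r :=
            lt_trans (Multiset.lt_cons_self r v) (Multiset.lt_cons_self _ u)
          have hevr : Even (Multiset.card r) := by
            simp only [Multiset.card_cons] at hev
            rcases hev with ⟨w, hw⟩
            exact ⟨w - 1, by omega⟩
          have := A.mul_mem (pairs u v) (ihs r hr hevr)
          simpa [Multiset.map_cons, Multiset.prod_cons, mul_assoc] using this
    -- even monomials
    have hmono : ∀ (s : (ℕ × Fin n) →₀ ℕ) (c : ℂ), Even (s.sum fun _ e => e) →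
        (monomial s c : Raux n) ∈ A := by
      intro s c hev
      have heq : (monomial s c : Raux n) = C c * ((s.toMultiset.map X).prod) := by
        rw [monomial_eq, prodX_toMultiset]
      rw [heq]
      refine A.mul_mem (A.algebraMap_mem c) (multis _ ?_)
      rw [Finsupp.card_toMultiset]
      exact hev
    -- decompose x into even and odd parts
    classical
    set T := x.support.filter (fun m => Even (m.sum fun _ e => e)) with hT
    set xe : Raux n := ∑ m ∈ T, monomial m (coeff m x) with hxe
    set xo : Raux n := ∑ m ∈ x.support.filter (fun m => ¬ Even (m.sum fun _ e => e)),
      monomial m (coeff m x) with hxo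
    have hsplit : x = xe + xo := by
      rw [hxe, hxo, Finset.sum_filter_add_sum_filter_not]
      exact (as_sum x)
    have hθx : θ x = xe - xo := by
      conv_lhs => rw [hsplit]
      rw [map_add, hxe, hxo, map_sum, map_sum]
      have he : (∑ m ∈ T, θ (monomial m (coeff m x))) = ∑ m ∈ T, monomial m (coeff m x) := by
        refine Finset.sum_congr rfl fun m hm => ?_
        rw [theta_monomial θ hθ]
        have : Even (m.sum fun _ e => e) := (Finset.mem_filter.mp hm).2
        rw [this.neg_one_pow, one_smul]
      have ho : (∑ m ∈ x.support.filter (fun m => ¬ Even (m.sum fun _ e => e)),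
          θ (monomial m (coeff m x))) =
          - ∑ m ∈ x.support.filter (fun m => ¬ Even (m.sum fun _ e => e)),
            monomial m (coeff m x) := by
        rw [← Finset.sum_neg_distrib]
        refine Finset.sum_congr rfl fun m hm => ?_
        rw [theta_monomial θ hθ]
        have : ¬ Even (m.sum fun _ e => e) := (Finset.mem_filter.mp hm).2
        rw [(Nat.not_even_iff_odd.mp this).neg_one_pow]
        simp
      rw [he, ho, sub_eq_add_neg]
    have hxo0 : xo = 0 := by
      have h1 : xe - xo = xe + xo := by rw [← hθx, hx, hsplit]
      have h2 : xo + xo = 0 := by linear_combination -h1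
      have := congrArg (fun y => (1/2 : ℂ) • y) h2
      simpa [two_smul, smul_add] using this
    rw [hsplit, hxo0, add_zero, hxe]
    exact A.sum_mem fun m hm => hmono m _ (Finset.mem_filter.mp hm).2
end

section
/- For every m ≥ 1 and 0 ≤ a ≤ b with a + b = 2m, there exist unique scalars λ_0, …, λ_m such that in C[α_a : a ≥ 0] with ∂(α_c) = α_{c+1} and q_{c,d} = α_c α_d, one has q_{a,b} = Σ_{k=0}^{m} λ_k ∂^{2k}(q_{0,2m-2k}). -/
open MvPolynomial Finset

theorem iterD (D : Derivation ℂ (MvPolynomial ℕ ℂ) (MvPolynomial ℕ ℂ))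
    (hD : ∀ c : ℕ, D (X c) = X (c + 1)) (n c d : ℕ) :
    (D.toLinearMap ^ n) (X c * X d) =
      ∑ j ∈ range (n + 1), ((n.choose j : ℂ)) • (X (c + j) * X (d + (n - j))) := by
  induction n with
  | zero => simp
  | succ n ih =>
    rw [pow_succ', Module.End.mul_apply, ih, map_sum]
    have step : ∀ j ∈ range (n + 1),
        D.toLinearMap (((n.choose j : ℂ)) • (X (c + j) * X (d + (n - j))))
          = ((n.choose j : ℂ)) • (X (c + j + 1) * X (d + (n - j)))
            + ((n.choose j : ℂ)) • (X (c + j) * X (d + (n - j) + 1)) := by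
      intro j hj
      rw [map_smul]
      have : D.toLinearMap (X (c + j) * X (d + (n - j)))
          = X (c + j + 1) * X (d + (n - j)) + X (c + j) * X (d + (n - j) + 1) := by
        show D (X (c + j) * X (d + (n - j))) = _
        rw [Derivation.leibniz, hD, hD, smul_eq_mul, smul_eq_mul]
        ring
      rw [this, smul_add]
    rw [Finset.sum_congr rfl step, Finset.sum_add_distrib]
    -- S2 : ∑ j ∈ range (n+1), C(n,j) • X(c+j) * X(d+(n-j)+1)  rewrite to d + (n+1-j)
    have hS2 : ∑ j ∈ range (n + 1), ((n.choose j : ℂ)) • (X (c + j) * X (d + (n - j) + 1))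
        = ∑ j ∈ range (n + 1), ((n.choose j : ℂ)) • (X (c + j) * X (d + (n + 1 - j)) : MvPolynomial ℕ ℂ) := by
      refine Finset.sum_congr rfl fun j hj => ?_
      have hjn : j ≤ n := by simpa [Nat.lt_succ_iff] using hj
      have : d + (n - j) + 1 = d + (n + 1 - j) := by omega
      rw [this]
    rw [hS2]
    -- now goal: S1 + S2' = ∑ j ∈ range (n+2), C(n+1,j) • X(c+j)*X(d+(n+1-j))
    rw [Finset.sum_range_succ' (fun j => ((n+1).choose j : ℂ) • (X (c + j) * X (d + (n + 1 - j)) : MvPolynomial ℕ ℂ)) (n+1)]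
    -- RHS = ∑ j ∈ range (n+1), C(n+1,j+1) • X(c+j+1)*X(d+(n+1-(j+1))) + C(n+1,0) • X c * X (d+n+1)
    have hsplit : ∀ j ∈ range (n + 1),
        (((n+1).choose (j+1) : ℂ)) • (X (c + (j+1)) * X (d + (n + 1 - (j+1))) : MvPolynomial ℕ ℂ)
          = ((n.choose j : ℂ)) • (X (c + j + 1) * X (d + (n - j)))
            + ((n.choose (j+1) : ℂ)) • (X (c + (j+1)) * X (d + (n - j))) := by
      intro j hj
      have hjn : j ≤ n := by simpa [Nat.lt_succ_iff] using hj
      have h1 : n + 1 - (j + 1) = n - j := by omega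
      rw [h1, Nat.choose_succ_succ, Nat.cast_add, add_smul]
      have : c + (j + 1) = c + j + 1 := by omega
      rw [this]
    rw [Finset.sum_congr rfl hsplit, Finset.sum_add_distrib]
    -- second piece: ∑ j ∈ range (n+1), C(n,j+1) • X(c+j+1)*X(d+(n-j))
    -- relate to S1 = ∑ j ∈ range (n+1), C(n,j) • X(c+j)*X(d+(n+1-j)) peeled
    have hS1 : ∑ j ∈ range (n + 1), ((n.choose j : ℂ)) • (X (c + j) * X (d + (n + 1 - j)) : MvPolynomial ℕ ℂ)
        = ∑ j ∈ range n, ((n.choose (j+1) : ℂ)) • (X (c + (j+1)) * X (d + (n - j))) + (1:ℂ) • (X c * X (d + (n+1))) := by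
      rw [Finset.sum_range_succ' (fun j => ((n.choose j : ℂ)) • (X (c + j) * X (d + (n + 1 - j)) : MvPolynomial ℕ ℂ)) n]
      simp only [Nat.choose_zero_right, Nat.cast_one, Nat.add_sub_cancel, add_zero]
      congr 1
      refine Finset.sum_congr rfl fun j hj => ?_
      have hjn : j < n := by simpa using hj
      have : n + 1 - (j + 1) = n - j := by omega
      rw [this]
    have hext : ∑ j ∈ range (n+1), ((n.choose (j+1) : ℂ)) • (X (c + (j+1)) * X (d + (n - j)) : MvPolynomial ℕ ℂ)
        = ∑ j ∈ range n, ((n.choose (j+1) : ℂ)) • (X (c + (j+1)) * X (d + (n - j))) := by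
      rw [Finset.sum_range_succ, Nat.choose_succ_self, Nat.cast_zero, zero_smul, add_zero]
    rw [hS1, hext]
    simp only [Nat.choose_zero_right, Nat.cast_one]
    abel


theorem coeffQ (m k i : ℕ) (hk : k ≤ m) (hi : i ≤ 2 * m) :
    ((Polynomial.X + 1) ^ (2 * k) * ((Polynomial.X : Polynomial ℂ) ^ (2 * (m - k)) + 1)).coeff i
      = ((2 * k).choose i : ℂ) + ((2 * k).choose (2 * m - i) : ℂ) := by
  rw [mul_add, mul_one, Polynomial.coeff_add, Polynomial.coeff_mul_X_pow',
    Polynomial.coeff_X_add_one_pow]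
  by_cases h : 2 * (m - k) ≤ i
  · rw [if_pos h, Polynomial.coeff_X_add_one_pow]
    have h2 : i - 2 * (m - k) ≤ 2 * k := by omega
    have h3 : 2 * k - (i - 2 * (m - k)) = 2 * m - i := by omega
    rw [← Nat.choose_symm h2, h3, add_comm]
  · rw [if_neg h]
    have : 2 * k < 2 * m - i := by omega
    rw [Nat.choose_eq_zero_of_lt this, Polynomial.coeff_X_add_one_pow]
    simp
theorem degQ (m k : ℕ) (hk : k ≤ m) :
    ((Polynomial.X + 1) ^ (2 * k) * ((Polynomial.X : Polynomial ℂ) ^ (2 * (m - k)) + 1)).natDegree ≤ 2 * m := by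
  refine le_trans (Polynomial.natDegree_mul_le) ?_
  have h1 : ((Polynomial.X + 1 : Polynomial ℂ) ^ (2 * k)).natDegree ≤ 2 * k := by
    refine le_trans (Polynomial.natDegree_pow_le) ?_
    have : (Polynomial.X + 1 : Polynomial ℂ).natDegree ≤ 1 := by
      refine le_trans (Polynomial.natDegree_add_le _ _) ?_
      simp [Polynomial.natDegree_X]
    calc 2 * k * (Polynomial.X + 1 : Polynomial ℂ).natDegree ≤ 2 * k * 1 :=
          Nat.mul_le_mul_left _ this
      _ = 2 * k := by omega
  have h2 : ((Polynomial.X : Polynomial ℂ) ^ (2 * (m - k)) + 1).natDegree ≤ 2 * (m - k) := by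
    refine le_trans (Polynomial.natDegree_add_le _ _) ?_
    simp [Polynomial.natDegree_X_pow]
  omega
theorem kernelQ : ∀ (M : ℕ) (d : ℕ → ℂ),
    (∑ k ∈ range (M + 1), d k • ((Polynomial.X + 1) ^ (2 * k) * ((Polynomial.X : Polynomial ℂ) ^ (2 * (M - k)) + 1)) = 0)
    → ∀ k ≤ M, d k = 0 := by
  intro M
  induction M with
  | zero =>
    intro d h k hk
    interval_cases k
    rw [Finset.sum_range_one] at h
    simp only [Nat.mul_zero, pow_zero, Nat.zero_sub, one_mul] at h
    have h2 : ((1:Polynomial ℂ) + 1) ≠ 0 := by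
      intro hc
      have := congrArg (Polynomial.eval 0) hc
      simp at this
    rcases smul_eq_zero.mp h with h | h
    · exact h
    · exact absurd h h2
  | succ M ih =>
    intro d h k hk
    -- first: d 0 = 0 by evaluating at -1
    have hd0 : d 0 = 0 := by
      have he := congrArg (Polynomial.eval (-1 : ℂ)) h
      simp only [Polynomial.eval_finset_sum, Polynomial.eval_smul, Polynomial.eval_mul,
        Polynomial.eval_pow, Polynomial.eval_add, Polynomial.eval_X, Polynomial.eval_one,
        Polynomial.eval_zero, smul_eq_mul] at he
      rw [Finset.sum_eq_single 0] at he
      · simp only [Nat.mul_zero, pow_zero, Nat.sub_zero, one_mul] at he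
        have : ((-1 : ℂ)) ^ (2 * (M + 1)) = 1 := by
          rw [pow_mul]; norm_num
        rw [this] at he
        have : d 0 * (1 + 1) = 0 := by linear_combination he
        have h2 : (1 + 1 : ℂ) ≠ 0 := by norm_num
        exact (mul_eq_zero.mp this).resolve_right h2
      · intro b _ hb
        have : ((-1 : ℂ) + 1) ^ (2 * b) = 0 := by
          rw [neg_add_cancel, zero_pow]
          omega
        rw [this, zero_mul, mul_zero]
      · intro hc
        simp at hc
    -- peel off k = 0 and factor (X+1)^2
    rw [Finset.sum_range_succ'] at h
    rw [hd0, zero_smul, add_zero] at h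
    have hfac : ∀ j ∈ range (M + 1),
        d (j + 1) • ((Polynomial.X + 1) ^ (2 * (j + 1)) * ((Polynomial.X : Polynomial ℂ) ^ (2 * (M + 1 - (j + 1))) + 1))
          = (Polynomial.X + 1) ^ 2 * (d (j + 1) • ((Polynomial.X + 1) ^ (2 * j) * ((Polynomial.X : Polynomial ℂ) ^ (2 * (M - j)) + 1))) := by
      intro j hj
      have h1 : 2 * (j + 1) = 2 + 2 * j := by omega
      have h2 : M + 1 - (j + 1) = M - j := by omega
      rw [h1, h2, pow_add, mul_smul_comm, mul_assoc]
    rw [Finset.sum_congr rfl hfac, ← Finset.mul_sum] at h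
    have hXne : ((Polynomial.X + 1 : Polynomial ℂ)) ^ 2 ≠ 0 := by
      apply pow_ne_zero
      intro hc
      have := congrArg (Polynomial.eval 0) hc
      simp at this
    have hz := (mul_eq_zero.mp h).resolve_left hXne
    have := ih (fun j => d (j + 1)) hz
    rcases Nat.eq_zero_or_pos k with rfl | hkpos
    · exact hd0
    · obtain ⟨k', rfl⟩ : ∃ k', k = k' + 1 := ⟨k - 1, by omega⟩
      exact this k' (by omega)


theorem muEq {m i j : ℕ} (hi : i ≤ 2 * m) :
    (Finsupp.single j 1 + Finsupp.single (2 * m - j) 1 : ℕ →₀ ℕ)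
      = Finsupp.single i 1 + Finsupp.single (2 * m - i) 1 ↔ (j = i ∨ j = 2 * m - i) := by
  constructor
  · intro h
    by_contra hc
    push_neg at hc
    have := DFunLike.congr_fun h j
    simp only [Finsupp.add_apply, Finsupp.single_apply] at this
    split_ifs at this <;> omega
  · rintro (rfl | rfl)
    · rfl
    · have h2 : 2 * m - (2 * m - i) = i := by omega
      rw [h2, add_comm]

theorem muEqFin {m : ℕ} {i j : ℕ} (hi : i ≤ m) (hj : j ≤ m) :
    (Finsupp.single j 1 + Finsupp.single (2 * m - j) 1 : ℕ →₀ ℕ)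
      = Finsupp.single i 1 + Finsupp.single (2 * m - i) 1 ↔ j = i := by
  rw [muEq (by omega)]
  constructor
  · rintro (rfl | rfl) <;> omega
  · rintro rfl; left; rfl

noncomputable def gmon (m i : ℕ) : MvPolynomial ℕ ℂ :=
  monomial (Finsupp.single i 1 + Finsupp.single (2 * m - i) 1) 1

noncomputable def Bmat (m k i : ℕ) : ℂ :=
  ∑ j ∈ Finset.range (2 * k + 1),
    ((2 * k).choose j : ℂ) * (if j = i ∨ j = 2 * m - i then 1 else 0)

theorem XmulX (c d : ℕ) : (X c * X d : MvPolynomial ℕ ℂ)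
    = monomial (Finsupp.single c 1 + Finsupp.single d 1) 1 := by
  rw [X, X, monomial_mul, one_mul]

theorem coeff_g (m i j : ℕ) (hi : i ≤ m) (hj : j ≤ m) :
    coeff (Finsupp.single i 1 + Finsupp.single (2 * m - i) 1) (gmon m j)
      = if j = i then (1 : ℂ) else 0 := by
  rw [gmon, coeff_monomial]
  simp only [muEqFin hi hj]

theorem coeff_gsum (m : ℕ) (e : Fin (m + 1) → ℂ) (i : Fin (m + 1)) :
    coeff (Finsupp.single (i : ℕ) 1 + Finsupp.single (2 * m - (i : ℕ)) 1)
      (∑ i' : Fin (m + 1), e i' • gmon m (i' : ℕ)) = e i := by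
  rw [MvPolynomial.coeff_sum]
  have h1 : ∀ i' : Fin (m + 1), coeff (Finsupp.single (i : ℕ) 1 + Finsupp.single (2 * m - (i : ℕ)) 1)
      (e i' • gmon m (i' : ℕ)) = if i' = i then e i' else 0 := by
    intro i'
    rw [MvPolynomial.coeff_smul, smul_eq_mul, coeff_g m _ _ (Fin.is_le i) (Fin.is_le i')]
    by_cases h : i' = i
    · subst h; simp
    · have : (i' : ℕ) ≠ (i : ℕ) := fun hc => h (Fin.ext hc)
      simp [h, this]
  rw [Finset.sum_congr rfl (fun i' _ => h1 i'), Finset.sum_ite_eq' univ i e]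
  simp

theorem hgsum (m j : ℕ) (hj : j ≤ 2 * m) :
    gmon m j = ∑ i : Fin (m + 1), (if j = (i : ℕ) ∨ j = 2 * m - (i : ℕ) then (1 : ℂ) else 0) • gmon m (i : ℕ) := by
  rcases le_or_gt j m with h | h
  · refine ((Finset.sum_eq_single_of_mem (⟨j, by omega⟩ : Fin (m + 1)) (Finset.mem_univ _) ?_).trans ?_).symm
    · intro i _ hne
      have hcond : ¬(j = (i : ℕ) ∨ j = 2 * m - (i : ℕ)) := by
        rintro (hji | hji)
        · exact hne (Fin.ext (show (i : ℕ) = j by omega))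
        · have hi := Fin.is_le i
          exact hne (Fin.ext (show (i : ℕ) = j by omega))
      rw [if_neg hcond, zero_smul]
    · have hcond : j = ((⟨j, by omega⟩ : Fin (m + 1)) : ℕ) ∨ j = 2 * m - ((⟨j, by omega⟩ : Fin (m + 1)) : ℕ) := Or.inl rfl
      rw [if_pos hcond, one_smul]
  · refine ((Finset.sum_eq_single_of_mem (⟨2 * m - j, by omega⟩ : Fin (m + 1)) (Finset.mem_univ _) ?_).trans ?_).symm
    · intro i _ hne
      have hcond : ¬(j = (i : ℕ) ∨ j = 2 * m - (i : ℕ)) := by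
        rintro (hji | hji)
        · have hi := Fin.is_le i; omega
        · have hi := Fin.is_le i
          exact hne (Fin.ext (show (i : ℕ) = 2 * m - j by omega))
      rw [if_neg hcond, zero_smul]
    · have hcond : j = ((⟨2 * m - j, by omega⟩ : Fin (m + 1)) : ℕ) ∨ j = 2 * m - ((⟨2 * m - j, by omega⟩ : Fin (m + 1)) : ℕ) := by
        right; show j = 2 * m - (2 * m - j); omega
      rw [if_pos hcond, one_smul]
      show gmon m (2 * m - j) = gmon m j
      rw [gmon, gmon]
      have harg : Finsupp.single (2 * m - j) 1 + Finsupp.single (2 * m - (2 * m - j)) 1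
          = Finsupp.single j 1 + Finsupp.single (2 * m - j) 1 := by
        have h2 : 2 * m - (2 * m - j) = j := by omega
        rw [h2, add_comm]
      rw [harg]



theorem sum_choose_ind (n N t : ℕ) (hN : n < N) :
    ∑ j ∈ Finset.range N, (n.choose j : ℂ) * (if j = t then 1 else 0) = (n.choose t : ℂ) := by
  have h1 : ∀ j ∈ Finset.range N, (n.choose j : ℂ) * (if j = t then 1 else 0)
      = if j = t then (n.choose j : ℂ) else 0 := by
    intro j _
    by_cases h : j = t <;> simp [h]
  rw [Finset.sum_congr rfl h1, Finset.sum_ite_eq' (range N) t]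
  by_cases h : t ∈ range N
  · rw [if_pos h]
  · rw [if_neg h]
    have : n < t := by simp at h; omega
    rw [Nat.choose_eq_zero_of_lt this, Nat.cast_zero]

theorem Bval (m k i : ℕ) (hi : i ≤ 2 * m) :
    Bmat m k i = ((2 * k).choose i : ℂ)
      + (if 2 * m - i = i then 0 else ((2 * k).choose (2 * m - i) : ℂ)) := by
  rw [Bmat]
  by_cases h : 2 * m - i = i
  · rw [if_pos h, add_zero]
    have h1 : ∀ j ∈ range (2 * k + 1), ((2 * k).choose j : ℂ) * (if j = i ∨ j = 2 * m - i then 1 else 0)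
        = ((2 * k).choose j : ℂ) * (if j = i then 1 else 0) := by
      intro j _
      rw [h]
      congr 1
      simp
    rw [Finset.sum_congr rfl h1, sum_choose_ind _ _ _ (by omega)]
  · have h1 : ∀ j ∈ range (2 * k + 1), ((2 * k).choose j : ℂ) * (if j = i ∨ j = 2 * m - i then 1 else 0)
        = ((2 * k).choose j : ℂ) * (if j = i then 1 else 0)
          + ((2 * k).choose j : ℂ) * (if j = 2 * m - i then 1 else 0) := by
      intro j _
      by_cases hji : j = i
      · have h2 : ¬j = 2 * m - i := by omega
        rw [if_pos (Or.inl hji), if_pos hji, if_neg h2]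
        ring
      · by_cases hji2 : j = 2 * m - i
        · rw [if_pos (Or.inr hji2), if_neg hji, if_pos hji2]
          ring
        · rw [if_neg (by tauto), if_neg hji, if_neg hji2]
          ring
    rw [Finset.sum_congr rfl h1, Finset.sum_add_distrib,
      sum_choose_ind _ _ _ (by omega), sum_choose_ind _ _ _ (by omega), if_neg h]


/-- For m ≥ 1 and 0 ≤ a ≤ b with a + b = 2m, there exist unique scalars λ_0, …, λ_m
with q_{a,b} = Σ_{k=0}^{m} λ_k ∂^{2k}(q_{0,2m-2k}), where q_{c,d} = α_c α_d. -/
theorem stmt_17 (D : Derivation ℂ (MvPolynomial ℕ ℂ) (MvPolynomial ℕ ℂ))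
    (hD : ∀ c : ℕ, D (X c) = X (c + 1))
    (m a b : ℕ) (hm : 1 ≤ m) (hab : a ≤ b) (hsum : a + b = 2 * m) :
    ∃! c : Fin (m + 1) → ℂ,
      X a * X b = ∑ k : Fin (m + 1),
        c k • (D.toLinearMap ^ (2 * (k : ℕ))) (X 0 * X (2 * m - 2 * k)) := by
  have ham : a ≤ m := by omega
  -- basis expansion of the derivative vectors
  have hv : ∀ k : Fin (m + 1), (D.toLinearMap ^ (2 * (k : ℕ))) (X 0 * X (2 * m - 2 * (k : ℕ)))
      = ∑ i : Fin (m + 1), Bmat m (k : ℕ) (i : ℕ) • gmon m (i : ℕ) := by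
    intro k
    have hk : (k : ℕ) ≤ m := Fin.is_le k
    rw [iterD D hD]
    have h1 : ∀ j ∈ range (2 * (k : ℕ) + 1),
        ((2 * (k : ℕ)).choose j : ℂ) • (X (0 + j) * X ((2 * m - 2 * (k : ℕ)) + (2 * (k : ℕ) - j)))
          = ((2 * (k : ℕ)).choose j : ℂ) • gmon m j := by
      intro j hj
      have hj' : j ≤ 2 * (k : ℕ) := by
        have := Finset.mem_range.mp hj; omega
      have e1 : 0 + j = j := by omega
      have e2 : (2 * m - 2 * (k : ℕ)) + (2 * (k : ℕ) - j) = 2 * m - j := by omega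
      rw [e1, e2, gmon, XmulX]
    rw [Finset.sum_congr rfl h1]
    have h2 : ∀ j ∈ range (2 * (k : ℕ) + 1), ((2 * (k : ℕ)).choose j : ℂ) • gmon m j
        = ∑ i : Fin (m + 1),
            (((2 * (k : ℕ)).choose j : ℂ) * (if j = (i : ℕ) ∨ j = 2 * m - (i : ℕ) then 1 else 0)) • gmon m (i : ℕ) := by
      intro j hj
      have hj2m : j ≤ 2 * m := by
        have := Finset.mem_range.mp hj; omega
      rw [hgsum m j hj2m, Finset.smul_sum]
      exact Finset.sum_congr rfl fun i _ => by rw [smul_smul]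
    rw [Finset.sum_congr rfl h2, Finset.sum_comm]
    exact Finset.sum_congr rfl fun i _ => by rw [← Finset.sum_smul]; rfl
  have hlhs : (X a * X b : MvPolynomial ℕ ℂ) = gmon m a := by
    have hb : b = 2 * m - a := by omega
    rw [hb, XmulX, gmon]
  -- the key coordinate equivalence
  have key : ∀ c : Fin (m + 1) → ℂ,
      (X a * X b = ∑ k : Fin (m + 1), c k • (D.toLinearMap ^ (2 * (k : ℕ))) (X 0 * X (2 * m - 2 * (k : ℕ))))
      ↔ (∀ i : Fin (m + 1), (∑ k : Fin (m + 1), c k * Bmat m (k : ℕ) (i : ℕ)) = (if (i : ℕ) = a then 1 else 0)) := by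
    intro c
    have hrhs : ∑ k : Fin (m + 1), c k • (D.toLinearMap ^ (2 * (k : ℕ))) (X 0 * X (2 * m - 2 * (k : ℕ)))
        = ∑ i : Fin (m + 1), (∑ k : Fin (m + 1), c k * Bmat m (k : ℕ) (i : ℕ)) • gmon m (i : ℕ) := by
      have h3 : ∀ k : Fin (m + 1),
          c k • (D.toLinearMap ^ (2 * (k : ℕ))) (X 0 * X (2 * m - 2 * (k : ℕ)))
            = ∑ i : Fin (m + 1), (c k * Bmat m (k : ℕ) (i : ℕ)) • gmon m (i : ℕ) := by
        intro k
        rw [hv k, Finset.smul_sum]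
        exact Finset.sum_congr rfl fun i _ => by rw [smul_smul]
      rw [Finset.sum_congr rfl fun k _ => h3 k, Finset.sum_comm]
      exact Finset.sum_congr rfl fun i _ => by rw [← Finset.sum_smul]
    have hlhs2 : (X a * X b : MvPolynomial ℕ ℂ)
        = ∑ i : Fin (m + 1), (if (i : ℕ) = a then (1 : ℂ) else 0) • gmon m (i : ℕ) := by
      rw [hlhs]
      refine ((Finset.sum_eq_single_of_mem (⟨a, by omega⟩ : Fin (m + 1)) (Finset.mem_univ _) ?_).trans ?_).symm
      · intro i _ hne
        rw [if_neg (fun hc => hne (Fin.ext (show (i : ℕ) = a from hc))), zero_smul]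
      · rw [if_pos rfl, one_smul]
    constructor
    · intro h i
      have h4 := congrArg (coeff (Finsupp.single (i : ℕ) 1 + Finsupp.single (2 * m - (i : ℕ)) 1)) h
      rw [hlhs2] at h4
      rw [hrhs, coeff_gsum, coeff_gsum] at h4
      exact h4.symm
    · intro h
      rw [hrhs, hlhs2]
      exact Finset.sum_congr rfl fun i _ => by rw [h i]
  -- linear map and bijectivity
  let L : (Fin (m + 1) → ℂ) →ₗ[ℂ] (Fin (m + 1) → ℂ) :=
    { toFun := fun c i => ∑ k : Fin (m + 1), c k * Bmat m (k : ℕ) (i : ℕ),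
      map_add' := by
        intro x y; funext i
        simp [add_mul, Finset.sum_add_distrib],
      map_smul' := by
        intro r x; funext i
        simp [Finset.mul_sum, mul_assoc] }
  have hinj : Function.Injective L := by
    rw [injective_iff_map_eq_zero]
    intro c hc0
    have hc0' : ∀ i : Fin (m + 1), ∑ k : Fin (m + 1), c k * Bmat m (k : ℕ) (i : ℕ) = 0 :=
      fun i => congrFun hc0 i
    have hpoly : ∑ k ∈ range (m + 1), (c ⟨k % (m + 1), Nat.mod_lt _ (by omega)⟩)
        • ((Polynomial.X + 1) ^ (2 * k) * ((Polynomial.X : Polynomial ℂ) ^ (2 * (m - k)) + 1)) = 0 := by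
      refine Polynomial.ext fun i => ?_
      rw [Polynomial.coeff_zero, Polynomial.finset_sum_coeff]
      by_cases hi2m : i ≤ 2 * m
      · have hcf : ∀ k ∈ range (m + 1),
            ((c ⟨k % (m + 1), Nat.mod_lt _ (by omega)⟩)
              • ((Polynomial.X + 1) ^ (2 * k) * ((Polynomial.X : Polynomial ℂ) ^ (2 * (m - k)) + 1))).coeff i
            = c ⟨k % (m + 1), Nat.mod_lt _ (by omega)⟩ * (((2 * k).choose i : ℂ) + ((2 * k).choose (2 * m - i) : ℂ)) := by
          intro k hk
          have hkm : k ≤ m := by have := Finset.mem_range.mp hk; omega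
          rw [Polynomial.coeff_smul, coeffQ m k i hkm hi2m, smul_eq_mul]
        rw [Finset.sum_congr rfl hcf]
        have hconv : ∀ i' : ℕ,
            ∑ k ∈ range (m + 1), c ⟨k % (m + 1), Nat.mod_lt _ (by omega)⟩ * Bmat m k i'
              = ∑ k : Fin (m + 1), c k * Bmat m (k : ℕ) i' := by
          intro i'
          rw [← Fin.sum_univ_eq_sum_range
            (fun k => c ⟨k % (m + 1), Nat.mod_lt _ (by omega)⟩ * Bmat m k i') (m + 1)]
          refine Finset.sum_congr rfl fun k _ => ?_
          have he : (⟨(k : ℕ) % (m + 1), Nat.mod_lt _ (by omega)⟩ : Fin (m + 1)) = k :=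
            Fin.ext (Nat.mod_eq_of_lt k.isLt)
          rw [he]
        -- now a sum of c_k * (C + C); compare with hc0'
        rcases lt_trichotomy i m with him | him | him
        · have hB : ∀ k, ((2 * k).choose i : ℂ) + ((2 * k).choose (2 * m - i) : ℂ) = Bmat m k i := by
            intro k
            rw [Bval m k i (by omega), if_neg (by omega)]
          rw [Finset.sum_congr rfl fun k _ => by rw [hB k], hconv i]
          exact hc0' ⟨i, by omega⟩
        · subst him
          have hB : ∀ k, ((2 * k).choose i : ℂ) + ((2 * k).choose (2 * i - i) : ℂ)
              = 2 * Bmat i k i := by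
            intro k
            rw [Bval i k i (by omega), if_pos (by omega), add_zero]
            have e : 2 * i - i = i := by omega
            rw [e]
            ring
          rw [Finset.sum_congr rfl fun k _ => by rw [hB k, mul_comm (c _) (2 * Bmat i k i),
            mul_assoc, mul_comm (Bmat i k i) (c _)], ← Finset.mul_sum, hconv i,
            hc0' ⟨i, by omega⟩, mul_zero]
        · have hB : ∀ k, ((2 * k).choose i : ℂ) + ((2 * k).choose (2 * m - i) : ℂ)
              = Bmat m k (2 * m - i) := by
            intro k
            have e : 2 * m - (2 * m - i) = i := by omega
            rw [Bval m k (2 * m - i) (by omega), e, if_neg (by omega), add_comm]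
          rw [Finset.sum_congr rfl fun k _ => by rw [hB k], hconv (2 * m - i)]
          exact hc0' ⟨2 * m - i, by omega⟩
      · have hcf : ∀ k ∈ range (m + 1),
            ((c ⟨k % (m + 1), Nat.mod_lt _ (by omega)⟩)
              • ((Polynomial.X + 1) ^ (2 * k) * ((Polynomial.X : Polynomial ℂ) ^ (2 * (m - k)) + 1))).coeff i = 0 := by
          intro k hk
          have hkm : k ≤ m := by have := Finset.mem_range.mp hk; omega
          rw [Polynomial.coeff_smul, Polynomial.coeff_eq_zero_of_natDegree_lt
            (lt_of_le_of_lt (degQ m k hkm) (by omega)), smul_zero]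
        rw [Finset.sum_congr rfl hcf, Finset.sum_const_zero]
    have hz := kernelQ m _ hpoly
    funext i
    have := hz (i : ℕ) (Fin.is_le i)
    simpa [Nat.mod_eq_of_lt i.isLt] using this
  have hsurj : Function.Surjective L := LinearMap.injective_iff_surjective.mp hinj
  obtain ⟨c₀, hc₀⟩ := hsurj (fun i => if (i : ℕ) = a then 1 else 0)
  refine ⟨c₀, (key c₀).mpr fun i => congrFun hc₀ i, fun y hy => ?_⟩
  exact hinj ((funext fun i => (key y).mp hy i).trans hc₀.symm)
end
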